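/- For every rooted tree G (with vertex probabilities as specified), the recursively defined value satisfies π(G) ≤ V_G ≤ 1. -/

import Mathlib

/-- A rooted tree with vertex probabilities: a single vertex, a root with one branch,
or a root with two branches. -/
inductive RTree : Type
  | leaf (p : ℝ) : RTree
  | node1 (p : ℝ) (G' : RTree) : RTree
  | node2 (p : ℝ) (G₁ G₂ : RTree) : RTree

namespace RTree

/-- Validity of the probabilities: every leaf has probability in `(0,1)`, and every
internal vertex (including the root) has probability in `(0,1]`. -/
def valid : RTree → Prop
  | leaf p => 0 < p ∧ p < 1
  | node1 p G' => (0 < p ∧ p ≤ 1) ∧ valid G'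
  | node2 p G₁ G₂ => (0 < p ∧ p ≤ 1) ∧ valid G₁ ∧ valid G₂

/-- `π(G)`, the product of the probabilities of all vertices of `G`. -/
def piT : RTree → ℝ
  | leaf p => p
  | node1 p G' => p * piT G'
  | node2 p G₁ G₂ => p * (piT G₁ * piT G₂)

/-- The recursively defined value `V_G` of the game on `G`. -/
noncomputable def valT : RTree → ℝ
  | leaf p => p
  | node1 p G' => p * valT G'
  | node2 p G₁ G₂ =>
      p * (((1 - piT G₁) / valT G₁ + (1 - piT G₂) / valT G₂)⁻¹) * (1 - piT G₁ * piT G₂)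

/-- The normalizing factor `λ` for a branch vertex with branches `G₁` and `G₂`. -/
noncomputable def lamT (G₁ G₂ : RTree) : ℝ :=
  ((1 - piT G₁) / valT G₁ + (1 - piT G₂) / valT G₂)⁻¹


/-- Vertices of a rooted tree, as addresses: the root is `[]`, and the address of a
vertex in a branch is the branch direction (`false` for the first/unique branch,
`true` for the second) followed by its address within the branch. -/
def verts : RTree → List (List Bool)
  | leaf _ => [[]]
  | node1 _ G' => [] :: (verts G').map (List.cons false)
  | node2 _ G₁ G₂ => [] :: ((verts G₁).map (List.cons false) ++ (verts G₂).map (List.cons true))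

/-- The success probability of the vertex at a given address. -/
def pAt : RTree → List Bool → ℝ
  | leaf p, _ => p
  | node1 p _, [] => p
  | node1 _ G', _ :: l => pAt G' l
  | node2 p _ _, [] => p
  | node2 _ G₁ _, false :: l => pAt G₁ l
  | node2 _ _ G₂, true :: l => pAt G₂ l

/-- The subtree `G(v)` rooted at the vertex with address `v` (if it exists). -/
def sub? : RTree → List Bool → Option RTree
  | t, [] => some t
  | leaf _, _ :: _ => none
  | node1 _ G', false :: l => sub? G' l
  | node1 _ _, true :: _ => none
  | node2 _ G₁ _, false :: l => sub? G₁ l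
  | node2 _ _ G₂, true :: l => sub? G₂ l

/-- The tree hiding strategy `h_G`, as a function assigning probabilities to addresses. -/
noncomputable def hide : RTree → List Bool → ℝ
  | leaf _, [] => 1
  | leaf _, _ :: _ => 0
  | node1 _ _, [] => 0
  | node1 _ G', false :: l => hide G' l
  | node1 _ _, true :: _ => 0
  | node2 _ _ _, [] => 0
  | node2 _ G₁ G₂, false :: l => lamT G₁ G₂ * ((1 - piT G₁) / valT G₁) * hide G₁ l
  | node2 _ G₁ G₂, true :: l => lamT G₁ G₂ * ((1 - piT G₂) / valT G₂) * hide G₂ l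

/-- An expanding search of `G`: an ordering of all of the vertices of `G` in which every
vertex other than the root appears after its parent (hence the root `[]` comes first). -/
def IsSearch (G : RTree) (σ : List (List Bool)) : Prop :=
  σ.Perm (verts G) ∧ ∀ a ∈ σ, a ≠ [] → σ.idxOf a.dropLast < σ.idxOf a

/-- A depth-first expanding search: for every vertex `v`, the vertices of the subtree
`G(v)` occupy consecutive positions beginning with `v`;  equivalently, any vertex `w`
appearing between `v` and a descendant of `v` is itself a descendant of `v`. -/
def IsDFS (G : RTree) (σ : List (List Bool)) : Prop :=
  IsSearch G σ ∧ ∀ v a w, v ∈ σ → a ∈ σ → w ∈ σ → v <+: a →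
    σ.idxOf v ≤ σ.idxOf w → σ.idxOf w ≤ σ.idxOf a → v <+: w

/-- `P(v,σ)`: the probability of reaching and successfully searching vertex `v`,
i.e. the product of `p` over the locations searched up to and including `v`. -/
def capProb (G : RTree) (σ : List (List Bool)) (v : List Bool) : ℝ :=
  ((σ.take (σ.idxOf v + 1)).map (pAt G)).prod

/-- `P(x,σ) = Σ_v x(v) P(v,σ)` for a distribution `x` on the vertices. -/
def payoffD (G : RTree) (x : List Bool → ℝ) (σ : List (List Bool)) : ℝ :=
  (σ.map (fun v => x v * capProb G σ v)).sum

end RTree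

lemma node2_arith (p π₁ π₂ V₁ V₂ : ℝ) (hp0 : 0 < p) (hp1 : p ≤ 1)
    (h1 : 0 < π₁) (h2 : π₁ < 1) (h3 : π₁ ≤ V₁) (h4 : V₁ ≤ 1)
    (k1 : 0 < π₂) (k2 : π₂ < 1) (k3 : π₂ ≤ V₂) (k4 : V₂ ≤ 1) :
    0 < p * (π₁ * π₂) ∧ p * (π₁ * π₂) < 1 ∧
    p * (π₁ * π₂) ≤ p * ((1 - π₁) / V₁ + (1 - π₂) / V₂)⁻¹ * (1 - π₁ * π₂) ∧
    p * ((1 - π₁) / V₁ + (1 - π₂) / V₂)⁻¹ * (1 - π₁ * π₂) ≤ 1 := by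
  have hV₁ : 0 < V₁ := lt_of_lt_of_le h1 h3
  have hV₂ : 0 < V₂ := lt_of_lt_of_le k1 k3
  have ha₁ : 0 < (1 - π₁) / V₁ := div_pos (by linarith) hV₁
  have ha₂ : 0 < (1 - π₂) / V₂ := div_pos (by linarith) hV₂
  have hpi12 : π₁ * π₂ < 1 := by nlinarith
  have hpi0 : 0 < π₁ * π₂ := mul_pos h1 k1
  have hub₁ : (1 - π₁) / V₁ ≤ (1 - π₁) / π₁ :=
    div_le_div_of_nonneg_left (by linarith) h1 h3
  have hub₂ : (1 - π₂) / V₂ ≤ (1 - π₂) / π₂ :=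
    div_le_div_of_nonneg_left (by linarith) k1 k3
  have hlb₁ : 1 - π₁ ≤ (1 - π₁) / V₁ := by
    rw [le_div_iff₀ hV₁]; nlinarith
  have hlb₂ : 1 - π₂ ≤ (1 - π₂) / V₂ := by
    rw [le_div_iff₀ hV₂]; nlinarith
  generalize hs_def : (1 - π₁) / V₁ + (1 - π₂) / V₂ = s
  have hs : 0 < s := by rw [← hs_def]; positivity
  have key1 : π₁ * π₂ * s ≤ 1 - π₁ * π₂ := by
    have h5 : π₁ * π₂ * s ≤ π₁ * π₂ * ((1 - π₁) / π₁ + (1 - π₂) / π₂) := by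
      apply mul_le_mul_of_nonneg_left (by rw [← hs_def]; linarith) hpi0.le
    have heq : π₁ * π₂ * ((1 - π₁) / π₁ + (1 - π₂) / π₂) = π₁ + π₂ - 2 * (π₁ * π₂) := by
      field_simp; ring
    nlinarith [mul_pos (by linarith : (0:ℝ) < 1 - π₁) (by linarith : (0:ℝ) < 1 - π₂)]
  have key2 : 1 - π₁ * π₂ ≤ s := by
    rw [← hs_def]
    nlinarith [mul_pos (by linarith : (0:ℝ) < 1 - π₁) (by linarith : (0:ℝ) < 1 - π₂)]
  have hmid : π₁ * π₂ ≤ s⁻¹ * (1 - π₁ * π₂) := by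
    rw [← div_eq_inv_mul, le_div_iff₀ hs]; exact key1
  have hmid2 : s⁻¹ * (1 - π₁ * π₂) ≤ 1 := by
    rw [← div_eq_inv_mul, div_le_one hs]; exact key2
  have hmidpos : 0 < s⁻¹ * (1 - π₁ * π₂) := mul_pos (inv_pos.mpr hs) (by linarith)
  refine ⟨mul_pos hp0 hpi0, by nlinarith, ?_, ?_⟩
  · rw [mul_assoc]
    exact mul_le_mul_of_nonneg_left hmid hp0.le
  · rw [mul_assoc]
    nlinarith

open RTree in
lemma value_bounds_aux (G : RTree) (hG : G.valid) :
    0 < G.piT ∧ G.piT < 1 ∧ G.piT ≤ G.valT ∧ G.valT ≤ 1 := by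
  induction G with
  | leaf p =>
    obtain ⟨h1, h2⟩ := hG
    exact ⟨h1, h2, le_refl _, h2.le⟩
  | node1 p G' ih =>
    obtain ⟨⟨hp0, hp1⟩, hG'⟩ := hG
    obtain ⟨h1, h2, h3, h4⟩ := ih hG'
    simp only [piT, valT]
    refine ⟨mul_pos hp0 h1, by nlinarith, by nlinarith, by nlinarith⟩
  | node2 p G₁ G₂ ih1 ih2 =>
    obtain ⟨⟨hp0, hp1⟩, hG₁, hG₂⟩ := hG
    obtain ⟨h1, h2, h3, h4⟩ := ih1 hG₁
    obtain ⟨k1, k2, k3, k4⟩ := ih2 hG₂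
    simp only [piT, valT]
    exact node2_arith p G₁.piT G₂.piT G₁.valT G₂.valT hp0 hp1 h1 h2 h3 h4 k1 k2 k3 k4

open RTree in
/-- for every rooted tree `G`, `π(G) ≤ V_G ≤ 1`. -/
theorem value_bounds (G : RTree) (hG : G.valid) :
    G.piT ≤ G.valT ∧ G.valT ≤ 1 := by
  obtain ⟨_, _, h3, h4⟩ := value_bounds_aux G hG
  exact ⟨h3, h4⟩
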